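/- For each i, j ∈ {1,2} let (pᵢⱼ, qᵢⱼ, rᵢⱼ, sᵢⱼ) be nonnegative reals summing to 1, representing the joint distribution of a ±1-valued pair (Aᵢⱼ, Bᵢⱼ) with Pr[Aᵢⱼ=+1,Bᵢⱼ=+1]=pᵢⱼ, Pr[Aᵢⱼ=+1,Bᵢⱼ=−1]=qᵢⱼ, Pr[Aᵢⱼ=−1,Bᵢⱼ=+1]=rᵢⱼ, Pr[Aᵢⱼ=−1,Bᵢⱼ=−1]=sᵢⱼ. There exists a probability distribution on ({−1,+1})⁴, viewed as the joint distribution of (H¹₁, H¹₂, H²₁, H²₂), such that the pair (H¹ᵢ, H²ⱼ) has the distribution (pᵢⱼ, qᵢⱼ, rᵢⱼ, sᵢⱼ) for all i, j ∈ {1,2}, if and only if (a) marginal selectivity holds: pᵢ₁ + qᵢ₁ = pᵢ₂ + qᵢ₂ and p₁ⱼ + r₁ⱼ = p₂ⱼ + r₂ⱼ for all i, j ∈ {1,2}, and (b) for every choice of i ≠ i′ and j ≠ j′ in {1,2}, −2 ≤ Eᵢⱼ + Eᵢ′ⱼ + Eᵢ′ⱼ′ − Eᵢⱼ′ ≤ 2,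 where Eᵢⱼ = pᵢⱼ + sᵢⱼ − qᵢⱼ − rᵢⱼ. -/

import Mathlib

def bg (a b c d : Bool) : Fin 2 → Fin 2 → Bool :=
  fun i j => if i = 0 then (if j = 0 then a else b) else (if j = 0 then c else d)

@[simp] lemma bg00 (a b c d : Bool) : bg a b c d 0 0 = a := rfl
@[simp] lemma bg01 (a b c d : Bool) : bg a b c d 0 1 = b := rfl
@[simp] lemma bg10 (a b c d : Bool) : bg a b c d 1 0 = c := rfl
@[simp] lemma bg11 (a b c d : Bool) : bg a b c d 1 1 = d := rfl

def bgEquiv : (Bool × Bool × Bool × Bool) ≃ (Fin 2 → Fin 2 → Bool) where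
  toFun x := bg x.1 x.2.1 x.2.2.1 x.2.2.2
  invFun h := (h 0 0, h 0 1, h 1 0, h 1 1)
  left_inv := by rintro ⟨a, b, c, d⟩; rfl
  right_inv := by
    intro h; funext i j; fin_cases i <;> fin_cases j <;> rfl

lemma sum_bg (f : (Fin 2 → Fin 2 → Bool) → ℝ) :
    ∑ h : Fin 2 → Fin 2 → Bool, f h =
      f (bg true true true true) + f (bg true true true false) +
      f (bg true true false true) + f (bg true true false false) +
      f (bg true false true true) + f (bg true false true false) +
      f (bg true false false true) + f (bg true false false false) +
      f (bg false true true true) + f (bg false true true false) +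
      f (bg false true false true) + f (bg false true false false) +
      f (bg false false true true) + f (bg false false true false) +
      f (bg false false false true) + f (bg false false false false) := by
  rw [← Fintype.sum_equiv bgEquiv (fun x => f (bgEquiv x)) f (fun x => rfl)]
  simp [Fintype.sum_prod_type, bgEquiv]
  ring

def Trip (u v a b0 b1 t z : ℝ) : Bool → Bool → Bool → ℝ
  | true, true, true => z
  | true, true, false => u - z
  | true, false, true => v - z
  | false, true, true => t - z
  | true, false, false => a - u - v + z
  | false, true, false => b0 - u - t + z
  | false, false, true => b1 - v - t + z
  | false, false, false => 1 - a - b0 - b1 + u + v + t - z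

def PBd (b0 b1 t : ℝ) : Bool → Bool → ℝ
  | true, true => t
  | true, false => b0 - t
  | false, true => b1 - t
  | false, false => 1 - b0 - b1 + t

lemma Trip_sum (u v a b0 b1 t z : ℝ) (β1 β2 : Bool) :
    Trip u v a b0 b1 t z true β1 β2 + Trip u v a b0 b1 t z false β1 β2
      = PBd b0 b1 t β1 β2 := by
  cases β1 <;> cases β2 <;> simp [Trip, PBd] <;> ring

noncomputable def Mu (T0 T1 : Bool → Bool → Bool → ℝ) (PB : Bool → Bool → ℝ)
    (h : Fin 2 → Fin 2 → Bool) : ℝ :=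
  if PB (h 1 0) (h 1 1) = 0 then 0
  else T0 (h 0 0) (h 1 0) (h 1 1) * T1 (h 0 1) (h 1 0) (h 1 1) / PB (h 1 0) (h 1 1)

lemma Mu_pair_snd (T0 T1 : Bool → Bool → Bool → ℝ) (PB : Bool → Bool → ℝ)
    (h0 : ∀ α β1 β2, 0 ≤ T0 α β1 β2)
    (hs0 : ∀ β1 β2, T0 true β1 β2 + T0 false β1 β2 = PB β1 β2)
    (hs1 : ∀ β1 β2, T1 true β1 β2 + T1 false β1 β2 = PB β1 β2)
    (α1 β1 β2 : Bool) :
    Mu T0 T1 PB (bg α1 true β1 β2) + Mu T0 T1 PB (bg α1 false β1 β2)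
      = T0 α1 β1 β2 := by
  simp only [Mu, bg00, bg01, bg10, bg11]
  by_cases hPB : PB β1 β2 = 0
  · simp only [hPB, if_pos rfl, add_zero]
    have h1 := h0 true β1 β2
    have h2 := h0 false β1 β2
    have h3 := hs0 β1 β2
    cases α1 <;> simp <;> linarith
  · simp only [hPB, if_false]
    rw [← add_div, ← mul_add, hs1 β1 β2,
      mul_div_assoc, div_self hPB, mul_one]

lemma Mu_pair_fst (T0 T1 : Bool → Bool → Bool → ℝ) (PB : Bool → Bool → ℝ)
    (h1 : ∀ α β1 β2, 0 ≤ T1 α β1 β2)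
    (hs0 : ∀ β1 β2, T0 true β1 β2 + T0 false β1 β2 = PB β1 β2)
    (hs1 : ∀ β1 β2, T1 true β1 β2 + T1 false β1 β2 = PB β1 β2)
    (α2 β1 β2 : Bool) :
    Mu T0 T1 PB (bg true α2 β1 β2) + Mu T0 T1 PB (bg false α2 β1 β2)
      = T1 α2 β1 β2 := by
  simp only [Mu, bg00, bg01, bg10, bg11]
  by_cases hPB : PB β1 β2 = 0
  · simp only [hPB, if_pos rfl, add_zero]
    have h1' := h1 true β1 β2
    have h2 := h1 false β1 β2
    have h3 := hs1 β1 β2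
    cases α2 <;> simp <;> linarith
  · simp only [hPB, if_false]
    rw [← add_div, ← add_mul, hs0 β1 β2,
      mul_comm, mul_div_assoc, div_self hPB, mul_one]

lemma Mu_nonneg (T0 T1 : Bool → Bool → Bool → ℝ) (PB : Bool → Bool → ℝ)
    (h0 : ∀ α β1 β2, 0 ≤ T0 α β1 β2) (h1 : ∀ α β1 β2, 0 ≤ T1 α β1 β2)
    (hPB : ∀ β1 β2, 0 ≤ PB β1 β2) (h : Fin 2 → Fin 2 → Bool) :
    0 ≤ Mu T0 T1 PB h := by
  unfold Mu
  split
  · exact le_refl _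
  exact div_nonneg (mul_nonneg (h0 _ _ _) (h1 _ _ _)) (hPB _ _)

set_option maxHeartbeats 2000000 in
/-- Bell/CHSH criterion. -/
theorem bell_chsh_general
    (p q r s : Fin 2 → Fin 2 → ℝ)
    (hp : ∀ i j, 0 ≤ p i j) (hq : ∀ i j, 0 ≤ q i j)
    (hr : ∀ i j, 0 ≤ r i j) (hs : ∀ i j, 0 ≤ s i j)
    (hsum : ∀ i j, p i j + q i j + r i j + s i j = 1) :
    (∃ μ : (Fin 2 → Fin 2 → Bool) → ℝ,
      (∀ h, 0 ≤ μ h) ∧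
      (∑ h : Fin 2 → Fin 2 → Bool, μ h = 1) ∧
      (∀ i j : Fin 2,
        ∑ h ∈ Finset.univ.filter
            (fun h : Fin 2 → Fin 2 → Bool => h 0 i = true ∧ h 1 j = true), μ h = p i j) ∧
      (∀ i j : Fin 2,
        ∑ h ∈ Finset.univ.filter
            (fun h : Fin 2 → Fin 2 → Bool => h 0 i = true ∧ h 1 j = false), μ h = q i j) ∧
      (∀ i j : Fin 2,
        ∑ h ∈ Finset.univ.filter
            (fun h : Fin 2 → Fin 2 → Bool => h 0 i = false ∧ h 1 j = true), μ h = r i j) ∧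
      (∀ i j : Fin 2,
        ∑ h ∈ Finset.univ.filter
            (fun h : Fin 2 → Fin 2 → Bool => h 0 i = false ∧ h 1 j = false), μ h = s i j)) ↔
    ((∀ i : Fin 2, p i 0 + q i 0 = p i 1 + q i 1) ∧
     (∀ j : Fin 2, p 0 j + r 0 j = p 1 j + r 1 j) ∧
     (∀ i i' j j' : Fin 2, i ≠ i' → j ≠ j' →
        -2 ≤ (p i j + s i j - q i j - r i j) + (p i' j + s i' j - q i' j - r i' j)
             + (p i' j' + s i' j' - q i' j' - r i' j')
             - (p i j' + s i j' - q i j' - r i j') ∧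
        (p i j + s i j - q i j - r i j) + (p i' j + s i' j - q i' j - r i' j)
             + (p i' j' + s i' j' - q i' j' - r i' j')
             - (p i j' + s i j' - q i j' - r i j') ≤ 2)) := by
  constructor
  · rintro ⟨μ, hnn, htot, hP, hQ, hR, hS⟩
    have expand : ∀ (i j : Fin 2) (c d : Bool),
        ∑ h ∈ Finset.univ.filter
            (fun h : Fin 2 → Fin 2 → Bool => h 0 i = c ∧ h 1 j = d), μ h =
        ∑ h : Fin 2 → Fin 2 → Bool, if h 0 i = c ∧ h 1 j = d then μ h else 0 := by
      intro i j c d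
      rw [Finset.sum_filter]
    have hE : ∀ i j : Fin 2, p i j + s i j - q i j - r i j =
        ∑ h : Fin 2 → Fin 2 → Bool, (if h 0 i = h 1 j then (1:ℝ) else -1) * μ h := by
      intro i j
      rw [← hP i j, ← hQ i j, ← hR i j, ← hS i j, expand, expand, expand, expand,
        sum_bg, sum_bg, sum_bg, sum_bg,
        sum_bg (fun h => (if h 0 i = h 1 j then (1:ℝ) else -1) * μ h)]
      fin_cases i <;> fin_cases j <;> simp <;> ring
    refine ⟨?_, ?_, ?_⟩
    · intro i
      rw [← hP i 0, ← hP i 1, ← hQ i 0, ← hQ i 1]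
      rw [expand, expand, expand, expand]
      rw [sum_bg, sum_bg, sum_bg, sum_bg]
      fin_cases i <;> simp <;> ring
    · intro j
      rw [← hP 0 j, ← hP 1 j, ← hR 0 j, ← hR 1 j]
      rw [expand, expand, expand, expand]
      rw [sum_bg, sum_bg, sum_bg, sum_bg]
      fin_cases j <;> simp <;> ring
    · rw [sum_bg] at htot
      intro i i' j j' hii hjj
      fin_cases i <;> fin_cases i' <;> fin_cases j <;> fin_cases j' <;>
        simp only [ne_eq, not_true_eq_false, Fin.mk_one, Fin.zero_eta] at hii hjj ⊢ <;>
        first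
        | exact absurd rfl hii
        | exact absurd rfl hjj
        | (rw [hE, hE, hE, hE]
           rw [sum_bg, sum_bg, sum_bg, sum_bg]
           constructor <;> (simp only [bg00, bg01, bg10, bg11]; norm_num) <;>
            linarith [hnn (bg true true true true), hnn (bg true true true false),
              hnn (bg true true false true), hnn (bg true true false false),
              hnn (bg true false true true), hnn (bg true false true false),
              hnn (bg true false false true), hnn (bg true false false false),
              hnn (bg false true true true), hnn (bg false true true false),
              hnn (bg false true false true), hnn (bg false true false false),
              hnn (bg false false true true), hnn (bg false false true false),
              hnn (bg false false false true), hnn (bg false false false false)])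
  · rintro ⟨ms1, ms2, chsh⟩
    have hEeq : ∀ i j : Fin 2, p i j + s i j - q i j - r i j
        = 4 * p i j - 2 * (p i 0 + q i 0) - 2 * (p 0 j + r 0 j) + 1 := by
      have h2 : ∀ k : Fin 2, k = 0 ∨ k = 1 := by decide
      intro i j
      rcases h2 i with rfl | rfl <;> rcases h2 j with rfl | rfl <;>
        linarith [ms1 0, ms1 1, ms2 0, ms2 1, hsum 0 0, hsum 0 1, hsum 1 0, hsum 1 1]
    have c1 := chsh 0 1 0 1 (by decide) (by decide)
    have c2 := chsh 0 1 1 0 (by decide) (by decide)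
    have c3 := chsh 1 0 0 1 (by decide) (by decide)
    have c4 := chsh 1 0 1 0 (by decide) (by decide)
    rw [hEeq, hEeq, hEeq, hEeq] at c1 c2 c3 c4
    obtain ⟨c1l, c1u⟩ := c1
    obtain ⟨c2l, c2u⟩ := c2
    obtain ⟨c3l, c3u⟩ := c3
    obtain ⟨c4l, c4u⟩ := c4
    set a0 : ℝ := p 0 0 + q 0 0 with ha0
    set a1 : ℝ := p 1 0 + q 1 0 with ha1
    set b0 : ℝ := p 0 0 + r 0 0 with hb0
    set b1 : ℝ := p 0 1 + r 0 1 with hb1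
    -- basic Fréchet-type facts
    have f1 : p 0 1 ≤ a0 := by linarith [ms1 0, hq 0 1]
    have f2 : p 1 1 ≤ a1 := by linarith [ms1 1, hq 1 1]
    have f3 : p 0 0 ≤ a0 := by linarith [hq 0 0]
    have f4 : p 1 0 ≤ a1 := by linarith [hq 1 0]
    have f5 : p 0 0 ≤ b0 := by linarith [hr 0 0]
    have f6 : p 0 1 ≤ b1 := by linarith [hr 0 1]
    have f7 : p 1 0 ≤ b0 := by linarith [ms2 0, hr 1 0]
    have f8 : p 1 1 ≤ b1 := by linarith [ms2 1, hr 1 1]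
    have g1 : a0 + b0 - 1 ≤ p 0 0 := by linarith [hs 0 0, hsum 0 0]
    have g2 : a0 + b1 - 1 ≤ p 0 1 := by linarith [hs 0 1, hsum 0 1, ms1 0]
    have g3 : a1 + b0 - 1 ≤ p 1 0 := by linarith [hs 1 0, hsum 1 0, ms2 0]
    have g4 : a1 + b1 - 1 ≤ p 1 1 := by linarith [hs 1 1, hsum 1 1, ms1 1, ms2 1]
    have n1 : 0 ≤ p 0 0 := hp 0 0
    have n2 : 0 ≤ p 0 1 := hp 0 1
    have n3 : 0 ≤ p 1 0 := hp 1 0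
    have n4 : 0 ≤ p 1 1 := hp 1 1
    have m1 : b0 ≤ 1 := by linarith [hsum 0 0, hq 0 0, hs 0 0]
    have m2 : b1 ≤ 1 := by linarith [hsum 0 1, hq 0 1, hs 0 1]
    have m3 : a0 ≤ 1 := by linarith [hsum 0 0, hr 0 0, hs 0 0]
    have m4 : a1 ≤ 1 := by linarith [hsum 1 0, hr 1 0, hs 1 0]
    have m5 : 0 ≤ b0 := by linarith [hr 0 0]
    have m6 : 0 ≤ b1 := by linarith [hr 0 1]
    have m7 : 0 ≤ a0 := by linarith [hq 0 0]
    have m8 : 0 ≤ a1 := by linarith [hq 1 0]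
    set t : ℝ := max (max (max 0 (b0 + b1 - 1)) (max (p 0 0 + p 0 1 - a0) (p 1 0 + p 1 1 - a1)))
        (max (a0 + b0 + b1 - p 0 0 - p 0 1 - 1) (a1 + b0 + b1 - p 1 0 - p 1 1 - 1)) with htdef
    have ht1 : (0:ℝ) ≤ t := by rw [htdef]; simp [le_max_iff]
    have ht2 : b0 + b1 - 1 ≤ t := by rw [htdef]; simp [le_max_iff]
    have ht3 : p 0 0 + p 0 1 - a0 ≤ t := by rw [htdef]; simp [le_max_iff]
    have ht4 : p 1 0 + p 1 1 - a1 ≤ t := by rw [htdef]; simp [le_max_iff]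
    have ht5 : a0 + b0 + b1 - p 0 0 - p 0 1 - 1 ≤ t := by rw [htdef]; simp [le_max_iff]
    have ht6 : a1 + b0 + b1 - p 1 0 - p 1 1 - 1 ≤ t := by rw [htdef]; simp [le_max_iff]
    have htu1 : t ≤ b0 := by
      rw [htdef]; simp only [max_le_iff]
      refine ⟨⟨⟨?_, ?_⟩, ?_, ?_⟩, ?_, ?_⟩ <;>
        linarith [f1, f2, f3, f4, f5, f6, f7, f8, g1, g2, g3, g4, c1l, c1u, c2l, c2u, c3l, c3u, c4l, c4u]
    have htu2 : t ≤ b1 := by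
      rw [htdef]; simp only [max_le_iff]
      refine ⟨⟨⟨?_, ?_⟩, ?_, ?_⟩, ?_, ?_⟩ <;>
        linarith [f1, f2, f3, f4, f5, f6, f7, f8, g1, g2, g3, g4, c1l, c1u, c2l, c2u, c3l, c3u, c4l, c4u]
    have htu3 : t ≤ b0 - p 0 0 + p 0 1 := by
      rw [htdef]; simp only [max_le_iff]
      refine ⟨⟨⟨?_, ?_⟩, ?_, ?_⟩, ?_, ?_⟩ <;>
        linarith [f1, f2, f3, f4, f5, f6, f7, f8, g1, g2, g3, g4, c1l, c1u, c2l, c2u, c3l, c3u, c4l, c4u]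
    have htu4 : t ≤ b1 - p 0 1 + p 0 0 := by
      rw [htdef]; simp only [max_le_iff]
      refine ⟨⟨⟨?_, ?_⟩, ?_, ?_⟩, ?_, ?_⟩ <;>
        linarith [f1, f2, f3, f4, f5, f6, f7, f8, g1, g2, g3, g4, c1l, c1u, c2l, c2u, c3l, c3u, c4l, c4u]
    have htu5 : t ≤ b0 - p 1 0 + p 1 1 := by
      rw [htdef]; simp only [max_le_iff]
      refine ⟨⟨⟨?_, ?_⟩, ?_, ?_⟩, ?_, ?_⟩ <;>
        linarith [f1, f2, f3, f4, f5, f6, f7, f8, g1, g2, g3, g4, c1l, c1u, c2l, c2u, c3l, c3u, c4l, c4u]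
    have htu6 : t ≤ b1 - p 1 1 + p 1 0 := by
      rw [htdef]; simp only [max_le_iff]
      refine ⟨⟨⟨?_, ?_⟩, ?_, ?_⟩, ?_, ?_⟩ <;>
        linarith [f1, f2, f3, f4, f5, f6, f7, f8, g1, g2, g3, g4, c1l, c1u, c2l, c2u, c3l, c3u, c4l, c4u]
    clear c1l c1u c2l c2u c3l c3u c4l c4u
    set z0 : ℝ := max (max 0 (p 0 0 + p 0 1 - a0)) (max (p 0 0 + t - b0) (p 0 1 + t - b1)) with hz0def
    set z1 : ℝ := max (max 0 (p 1 0 + p 1 1 - a1)) (max (p 1 0 + t - b0) (p 1 1 + t - b1)) with hz1def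
    have hz0a : (0:ℝ) ≤ z0 := by rw [hz0def]; simp [le_max_iff]
    have hz0b : p 0 0 + p 0 1 - a0 ≤ z0 := by rw [hz0def]; simp [le_max_iff]
    have hz0c : p 0 0 + t - b0 ≤ z0 := by rw [hz0def]; simp [le_max_iff]
    have hz0d : p 0 1 + t - b1 ≤ z0 := by rw [hz0def]; simp [le_max_iff]
    have hz1a : (0:ℝ) ≤ z1 := by rw [hz1def]; simp [le_max_iff]
    have hz1b : p 1 0 + p 1 1 - a1 ≤ z1 := by rw [hz1def]; simp [le_max_iff]
    have hz1c : p 1 0 + t - b0 ≤ z1 := by rw [hz1def]; simp [le_max_iff]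
    have hz1d : p 1 1 + t - b1 ≤ z1 := by rw [hz1def]; simp [le_max_iff]
    have hz0u : z0 ≤ p 0 0 := by
      rw [hz0def]; simp only [max_le_iff]
      refine ⟨⟨?_, ?_⟩, ?_, ?_⟩ <;> linarith
    have hz0v : z0 ≤ p 0 1 := by
      rw [hz0def]; simp only [max_le_iff]
      refine ⟨⟨?_, ?_⟩, ?_, ?_⟩ <;> linarith
    have hz0t : z0 ≤ t := by
      rw [hz0def]; simp only [max_le_iff]
      refine ⟨⟨?_, ?_⟩, ?_, ?_⟩ <;> linarith
    have hz0w : z0 ≤ 1 - a0 - b0 - b1 + p 0 0 + p 0 1 + t := by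
      rw [hz0def]; simp only [max_le_iff]
      refine ⟨⟨?_, ?_⟩, ?_, ?_⟩ <;> linarith
    have hz1u : z1 ≤ p 1 0 := by
      rw [hz1def]; simp only [max_le_iff]
      refine ⟨⟨?_, ?_⟩, ?_, ?_⟩ <;> linarith
    have hz1v : z1 ≤ p 1 1 := by
      rw [hz1def]; simp only [max_le_iff]
      refine ⟨⟨?_, ?_⟩, ?_, ?_⟩ <;> linarith
    have hz1t : z1 ≤ t := by
      rw [hz1def]; simp only [max_le_iff]
      refine ⟨⟨?_, ?_⟩, ?_, ?_⟩ <;> linarith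
    have hz1w : z1 ≤ 1 - a1 - b0 - b1 + p 1 0 + p 1 1 + t := by
      rw [hz1def]; simp only [max_le_iff]
      refine ⟨⟨?_, ?_⟩, ?_, ?_⟩ <;> linarith
    clear f1 f2 f3 f4 f5 f6 f7 f8 g1 g2 g3 g4 n1 n2 n3 n4 m1 m2 m3 m4 m5 m6 m7 m8 hEeq
    have hT0nn : ∀ α β1 β2 : Bool, 0 ≤ Trip (p 0 0) (p 0 1) a0 b0 b1 t z0 α β1 β2 := by
      intro α β1 β2
      cases α <;> cases β1 <;> cases β2 <;> simp only [Trip] <;> linarith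
    have hT1nn : ∀ α β1 β2 : Bool, 0 ≤ Trip (p 1 0) (p 1 1) a1 b0 b1 t z1 α β1 β2 := by
      intro α β1 β2
      cases α <;> cases β1 <;> cases β2 <;> simp only [Trip] <;> linarith
    have hPBnn : ∀ β1 β2 : Bool, 0 ≤ PBd b0 b1 t β1 β2 := by
      intro β1 β2
      cases β1 <;> cases β2 <;> simp only [PBd] <;> linarith
    have hS0 := Trip_sum (p 0 0) (p 0 1) a0 b0 b1 t z0
    have hS1 := Trip_sum (p 1 0) (p 1 1) a1 b0 b1 t z1
    have P0 := Mu_pair_snd _ _ _ hT0nn hS0 hS1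
    have P1 := Mu_pair_fst _ _ _ hT1nn hS0 hS1
    have A1 := P0 true true true
    have A2 := P0 true true false
    have A3 := P0 true false true
    have A4 := P0 true false false
    have A5 := P0 false true true
    have A6 := P0 false true false
    have A7 := P0 false false true
    have A8 := P0 false false false
    have B1 := P1 true true true
    have B2 := P1 true true false
    have B3 := P1 true false true
    have B4 := P1 true false false
    have B5 := P1 false true true
    have B6 := P1 false true false
    have B7 := P1 false false true
    have B8 := P1 false false false
    simp only [Trip] at A1 A2 A3 A4 A5 A6 A7 A8 B1 B2 B3 B4 B5 B6 B7 B8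
    have h2 : ∀ k : Fin 2, k = 0 ∨ k = 1 := by decide
    refine ⟨Mu (Trip (p 0 0) (p 0 1) a0 b0 b1 t z0) (Trip (p 1 0) (p 1 1) a1 b0 b1 t z1)
        (PBd b0 b1 t), fun h => Mu_nonneg _ _ _ hT0nn hT1nn hPBnn h, ?_, ?_, ?_, ?_, ?_⟩
    · rw [sum_bg]
      linarith [ms1 0, ms1 1, ms2 0, ms2 1, hsum 0 0, hsum 0 1, hsum 1 0, hsum 1 1]
    all_goals
      intro i j
      rcases h2 i with rfl | rfl <;> rcases h2 j with rfl | rfl <;>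
        (rw [Finset.sum_filter, sum_bg]
         simp only [bg00, bg01, bg10, bg11]
         norm_num
         linarith [ms1 0, ms1 1, ms2 0, ms2 1, hsum 0 0, hsum 0 1, hsum 1 0, hsum 1 1])
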